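/- Let p_1, p_2 ∈ ℝ[s,t] be bivariate polynomials, let l = αs + βt + c be a polynomial of degree one with (α,β) ≠ (0,0), and let r ∈ ℕ. Then all partial derivatives of p_1 and of p_2 of total order ≤ r coincide at every point of the line L = {(s,t) ∈ ℝ² : l(s,t) = 0} if and only if l^{r+1} divides p_1 − p_2 in ℝ[s,t]. -/

import Mathlib

open MvPolynomial

noncomputable section

/-- evaluation of a polynomial substitution -/
lemma eval_aeval' (x : Fin 2 → ℝ) (f : Fin 2 → MvPolynomial (Fin 2) ℝ)
    (p : MvPolynomial (Fin 2) ℝ) :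
    eval x (aeval f p) = eval (fun i => eval x (f i)) p := by
  induction p using MvPolynomial.induction_on with
  | C a => simp
  | add p q hp hq => simp only [map_add, hp, hq, eval_add]
  | mul_X p n hp => simp only [map_mul, aeval_X, eval_mul, eval_X, hp]

lemma aeval_aeval_self (f g : Fin 2 → MvPolynomial (Fin 2) ℝ)
    (hfg : ∀ i, aeval g (f i) = X i) (p : MvPolynomial (Fin 2) ℝ) :
    aeval g (aeval f p) = p := by
  induction p using MvPolynomial.induction_on with
  | C a => simp
  | add p q hp hq => simp only [map_add, hp, hq]
  | mul_X p n hp => simp only [map_mul, aeval_X, hfg, hp]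

lemma X0_dvd_of_vanish (P : MvPolynomial (Fin 2) ℝ)
    (h : ∀ x : Fin 2 → ℝ, x 0 = 0 → eval x P = 0) : X (0 : Fin 2) ∣ P := by
  classical
  set f : Fin 2 → MvPolynomial (Fin 2) ℝ := fun i => if i = 0 then 0 else X i with hf
  have key : X (0 : Fin 2) ∣ P - aeval f P := by
    clear h
    induction P using MvPolynomial.induction_on with
    | C a => simp
    | add p q hp hq =>
        have : p + q - aeval f (p + q) = (p - aeval f p) + (q - aeval f q) := by
          rw [map_add]; ring
        rw [this]; exact dvd_add hp hq
    | mul_X p n hp =>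
        rw [map_mul, aeval_X]
        by_cases hn : n = 0
        · subst hn
          simp only [hf, if_pos rfl, mul_zero, sub_zero]
          exact Dvd.intro_left p rfl
        · have : f n = X n := by simp [hf, hn]
          rw [this]
          have : p * X n - aeval f p * X n = (p - aeval f p) * X n := by ring
          rw [this]
          exact hp.mul_right _
  have hz : aeval f P = 0 := by
    have := MvPolynomial.funext (p := aeval f P) (q := 0) (fun x => by
      rw [eval_aeval' x f P, h _ (by simp [hf]), map_zero])
    exact this
  rw [hz, sub_zero] at key
  exact key

lemma line_dvd_aux (l : MvPolynomial (Fin 2) ℝ) (f g : Fin 2 → MvPolynomial (Fin 2) ℝ)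
    (hfg : ∀ i, aeval g (f i) = X i) (hg0 : g 0 = l)
    (hline : ∀ x : Fin 2 → ℝ, x 0 = 0 → eval (fun i => eval x (f i)) l = 0)
    (q : MvPolynomial (Fin 2) ℝ) (hq : ∀ x, eval x l = 0 → eval x q = 0) : l ∣ q := by
  have hX : X (0 : Fin 2) ∣ aeval f q := by
    apply X0_dvd_of_vanish
    intro x hx
    rw [eval_aeval' x f q]
    exact hq _ (hline x hx)
  obtain ⟨h, hh⟩ := hX
  have : q = aeval g (aeval f q) := (aeval_aeval_self f g hfg q).symm
  rw [this, hh, map_mul, aeval_X, hg0]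
  exact Dvd.intro _ rfl

lemma line_dvd (α β c : ℝ) (hαβ : α ≠ 0 ∨ β ≠ 0) (q : MvPolynomial (Fin 2) ℝ)
    (hq : ∀ x : Fin 2 → ℝ, eval x (C α * X 0 + C β * X 1 + C c) = 0 → eval x q = 0) :
    (C α * X 0 + C β * X 1 + C c) ∣ q := by
  rcases hαβ with hα | hβ
  · refine line_dvd_aux _ ![C α⁻¹ * (X 0 - C β * X 1 - C c), X 1]
      ![C α * X 0 + C β * X 1 + C c, X 1] ?_ rfl ?_ q hq
    · intro i
      fin_cases i
      · show aeval _ (C α⁻¹ * (X 0 - C β * X 1 - C c)) = X 0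
        simp only [map_mul, map_sub, aeval_X, aeval_C, algebraMap_eq]
        show C α⁻¹ * ((C α * X 0 + C β * X 1 + C c : MvPolynomial (Fin 2) ℝ)
          - C β * X 1 - C c) = X 0
        rw [show (C α * X 0 + C β * X 1 + C c : MvPolynomial (Fin 2) ℝ)
          - C β * X 1 - C c = C α * X 0 by ring, ← mul_assoc, ← C_mul,
          inv_mul_cancel₀ hα, C_1, one_mul]
      · show aeval _ (X 1 : MvPolynomial (Fin 2) ℝ) = X 1
        simp
    · intro x hx
      simp [hx]
      field_simp
      ring
  · refine line_dvd_aux _ ![X 1, C β⁻¹ * (X 0 - C α * X 1 - C c)]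
      ![C α * X 0 + C β * X 1 + C c, X 0] ?_ rfl ?_ q hq
    · intro i
      fin_cases i
      · show aeval _ (X 1 : MvPolynomial (Fin 2) ℝ) = X 0
        simp
      · show aeval _ (C β⁻¹ * (X 0 - C α * X 1 - C c)) = X 1
        simp only [map_mul, map_sub, aeval_X, aeval_C, algebraMap_eq]
        show C β⁻¹ * ((C α * X 0 + C β * X 1 + C c : MvPolynomial (Fin 2) ℝ)
          - C α * X 0 - C c) = X 1
        rw [show (C α * X 0 + C β * X 1 + C c : MvPolynomial (Fin 2) ℝ)
          - C α * X 0 - C c = C β * X 1 by ring, ← mul_assoc, ← C_mul,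
          inv_mul_cancel₀ hβ, C_1, one_mul]
    · intro x hx
      simp [hx]
      field_simp
      ring

lemma iter_pderiv_sub (i : Fin 2) (m : ℕ) (a b : MvPolynomial (Fin 2) ℝ) :
    (fun p => pderiv i p)^[m] (a - b)
      = (fun p => pderiv i p)^[m] a - (fun p => pderiv i p)^[m] b := by
  induction m generalizing a b with
  | zero => rfl
  | succ m ih =>
      rw [Function.iterate_succ_apply, Function.iterate_succ_apply,
        Function.iterate_succ_apply]
      show (fun p => pderiv i p)^[m] (pderiv i (a - b)) = _
      rw [map_sub]
      exact ih _ _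

lemma pow_dvd_pderiv (l p : MvPolynomial (Fin 2) ℝ) (n : ℕ) (i : Fin 2)
    (h : l ^ (n + 1) ∣ p) : l ^ n ∣ pderiv i p := by
  obtain ⟨q, rfl⟩ := h
  rw [pderiv_mul, pderiv_pow, Nat.add_sub_cancel]
  exact dvd_add (((dvd_mul_left _ _).mul_right _).mul_right _)
    ((pow_dvd_pow l (Nat.le_succ n)).mul_right _)

lemma pow_dvd_iter (l : MvPolynomial (Fin 2) ℝ) (n m : ℕ) (i : Fin 2)
    (p : MvPolynomial (Fin 2) ℝ) (h : l ^ (n + m) ∣ p) :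
    l ^ n ∣ (fun p => pderiv i p)^[m] p := by
  induction m generalizing n p with
  | zero => simpa using h
  | succ m ih =>
      rw [Function.iterate_succ_apply']
      exact pow_dvd_pderiv _ _ _ _
        (ih (n + 1) p (by rw [show n + 1 + m = n + (m + 1) from by omega]; exact h))

lemma iter_deriv_form (l : MvPolynomial (Fin 2) ℝ) (i : Fin 2) (γ : ℝ)
    (hl : pderiv i l = C γ) :
    ∀ (k n : ℕ), k ≤ n → ∀ (e : ℝ) (h g : MvPolynomial (Fin 2) ℝ),
    ∃ g', (fun p => pderiv i p)^[k] (C e * l ^ n * h + l ^ (n + 1) * g) =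
      C (e * γ ^ k * (n.descFactorial k : ℝ)) * l ^ (n - k) * h + l ^ (n - k + 1) * g' := by
  intro k
  induction k with
  | zero =>
      intro n _ e h g
      exact ⟨g, by simp⟩
  | succ k ih =>
      intro n hkn e h g
      obtain ⟨n', rfl⟩ : ∃ n', n = n' + 1 := ⟨n - 1, by omega⟩
      rw [Function.iterate_succ_apply]
      have step : pderiv i (C e * l ^ (n' + 1) * h + l ^ (n' + 1 + 1) * g) =
          C (e * γ * ((n' : ℝ) + 1)) * l ^ n' * h +
            l ^ (n' + 1) * (C e * pderiv i h + C (γ * ((n' : ℝ) + 2)) * g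
              + l * pderiv i g) := by
        simp only [map_add, pderiv_mul, pderiv_pow, hl, pderiv_C,
          Nat.add_sub_cancel, C_mul, C_add, C_1, C_eq_coe_nat, map_ofNat]
        push_cast
        ring
      obtain ⟨g', hg'⟩ := ih n' (by omega) (e * γ * ((n' : ℝ) + 1)) h
        (C e * pderiv i h + C (γ * ((n' : ℝ) + 2)) * g + l * pderiv i g)
      refine ⟨g', ?_⟩
      have h1 : n' - k = n' + 1 - (k + 1) := by omega
      have h2 : e * γ * ((n' : ℝ) + 1) * γ ^ k * (n'.descFactorial k : ℝ)
          = e * γ ^ (k + 1) * ((n' + 1).descFactorial (k + 1) : ℝ) := by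
        rw [Nat.succ_descFactorial_succ]
        push_cast
        ring
      rw [step, hg', h2, h1]

lemma main_forward (α β c : ℝ) (hαβ : α ≠ 0 ∨ β ≠ 0) :
    ∀ (r : ℕ) (q : MvPolynomial (Fin 2) ℝ),
    (∀ j k : ℕ, j + k ≤ r → ∀ x : Fin 2 → ℝ,
        eval x (C α * X 0 + C β * X 1 + C c) = 0 →
        eval x ((fun p => pderiv 0 p)^[j] ((fun p => pderiv 1 p)^[k] q)) = 0) →
    (C α * X 0 + C β * X 1 + C c) ^ (r + 1) ∣ q := by
  intro r
  induction r with
  | zero =>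
      intro q hq
      rw [pow_one]
      exact line_dvd α β c hαβ q (fun x hx => hq 0 0 le_rfl x hx)
  | succ r ih =>
      intro q hq
      obtain ⟨h, rfl⟩ := ih q (fun j k hjk x hx => hq j k (by omega) x hx)
      set l : MvPolynomial (Fin 2) ℝ := C α * X 0 + C β * X 1 + C c with hldef
      suffices hlh : l ∣ h by
        obtain ⟨h', rfl⟩ := hlh
        exact ⟨h', by ring⟩
      apply line_dvd α β c hαβ
      intro x hx
      have e0 : C (1 : ℝ) * l ^ (r + 1) * h + l ^ (r + 1 + 1) * 0 = l ^ (r + 1) * h := by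
        simp
      rcases hαβ with hα | hβ
      · have hpd : pderiv (0 : Fin 2) l = C α := by
          rw [hldef]
          simp [pderiv_mul]
        obtain ⟨g', hg'⟩ := iter_deriv_form l 0 α hpd (r + 1) (r + 1) le_rfl 1 h 0
        rw [e0] at hg'
        have hval := hq (r + 1) 0 (by omega) x hx
        rw [Function.iterate_zero_apply, hg'] at hval
        simp only [eval_add, eval_mul, eval_C, eval_pow, hx, (show eval x l = 0 from hx), Nat.sub_self, pow_zero,
          pow_one, mul_one, zero_mul, mul_zero, add_zero, zero_add, Nat.descFactorial_self,
          one_mul] at hval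
        rcases mul_eq_zero.mp hval with h1 | h1
        · exact absurd h1 (mul_ne_zero (pow_ne_zero _ hα)
            (Nat.cast_ne_zero.mpr (Nat.factorial_ne_zero _)))
        · exact h1
      · have hpd : pderiv (1 : Fin 2) l = C β := by
          rw [hldef]
          simp [pderiv_mul]
        obtain ⟨g', hg'⟩ := iter_deriv_form l 1 β hpd (r + 1) (r + 1) le_rfl 1 h 0
        rw [e0] at hg'
        have hval := hq 0 (r + 1) (by omega) x hx
        rw [Function.iterate_zero_apply, hg'] at hval
        simp only [eval_add, eval_mul, eval_C, eval_pow, hx, (show eval x l = 0 from hx), Nat.sub_self, pow_zero,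
          pow_one, mul_one, zero_mul, mul_zero, add_zero, zero_add, Nat.descFactorial_self,
          one_mul] at hval
        rcases mul_eq_zero.mp hval with h1 | h1
        · exact absurd h1 (mul_ne_zero (pow_ne_zero _ hβ)
            (Nat.cast_ne_zero.mpr (Nat.factorial_ne_zero _)))
        · exact h1

end

/-- for bivariate polynomials `p₁, p₂ ∈ ℝ[s,t]`, a degree-one polynomial
`l = α s + β t + c` with `(α, β) ≠ (0, 0)` and `r ∈ ℕ`, all partial derivatives of `p₁` and
`p₂` of total order at most `r` coincide at every point of the line `{l = 0}` iff
`l^{r+1}` divides `p₁ - p₂`. -/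
theorem derivatives_coincide_on_line_iff_dvd
    (p₁ p₂ : MvPolynomial (Fin 2) ℝ) (α β c : ℝ) (hαβ : α ≠ 0 ∨ β ≠ 0) (r : ℕ) :
    (∀ j k : ℕ, j + k ≤ r → ∀ x : Fin 2 → ℝ,
        eval x (C α * X 0 + C β * X 1 + C c) = 0 →
        eval x ((fun p => pderiv 0 p)^[j] ((fun p => pderiv 1 p)^[k] p₁)) =
          eval x ((fun p => pderiv 0 p)^[j] ((fun p => pderiv 1 p)^[k] p₂))) ↔
      (C α * X 0 + C β * X 1 + C c) ^ (r + 1) ∣ p₁ - p₂ := by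
  have hsub : ∀ (j k : ℕ),
      (fun p => pderiv (0 : Fin 2) p)^[j] ((fun p => pderiv (1 : Fin 2) p)^[k] (p₁ - p₂))
        = (fun p => pderiv (0 : Fin 2) p)^[j] ((fun p => pderiv (1 : Fin 2) p)^[k] p₁)
          - (fun p => pderiv (0 : Fin 2) p)^[j] ((fun p => pderiv (1 : Fin 2) p)^[k] p₂) := by
    intro j k
    rw [iter_pderiv_sub, iter_pderiv_sub]
  constructor
  · intro H
    apply main_forward α β c hαβ r
    intro j k hjk x hx
    rw [hsub j k, map_sub, H j k hjk x hx, sub_self]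
  · intro hdvd j k hjk x hx
    have h2 : (C α * X 0 + C β * X 1 + C c) ^ (1 + j) ∣
        (fun p => pderiv (1 : Fin 2) p)^[k] (p₁ - p₂) := by
      apply pow_dvd_iter
      exact (pow_dvd_pow _ (by omega : 1 + j + k ≤ r + 1)).trans hdvd
    have h1 : (C α * X 0 + C β * X 1 + C c) ∣
        (fun p => pderiv (0 : Fin 2) p)^[j] ((fun p => pderiv (1 : Fin 2) p)^[k] (p₁ - p₂)) := by
      have := pow_dvd_iter (C α * X 0 + C β * X 1 + C c) 1 j 0 _ h2
      rwa [pow_one] at this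
    obtain ⟨w, hw⟩ := h1
    have : eval x ((fun p => pderiv (0 : Fin 2) p)^[j]
        ((fun p => pderiv (1 : Fin 2) p)^[k] (p₁ - p₂))) = 0 := by
      rw [hw, eval_mul, hx, zero_mul]
    rw [hsub j k, map_sub] at this
    linarith [this]
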